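/- There exists a constant C > 0 such that for all positive integers n, every entry of the deformed Mertens matrix M̃_n = T Ũ_n⁻¹ T satisfies |(M̃_n)_{ij}| ≤ C log(n + 1). -/

import Mathlib

/-- The set of approximate divisors of `n`: distinct values of `⌊n/k⌋` for `1 ≤ k ≤ n`. -/
def Sn (n : ℕ) : Finset ℕ := (Finset.Icc 1 n).image (fun k => n / k)

/-- The increasing enumeration `k_1 < ⋯ < k_s` of `S_n` (0-indexed by `Fin s`). -/
noncomputable def kseq (n : ℕ) : Fin (Sn n).card → ℕ :=
  fun i => ((Sn n).orderIsoOfFin rfl i : ℕ)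

/-- The real matrix `T` with ones on and above the antidiagonal. -/
def TmatR (s : ℕ) : Matrix (Fin s) (Fin s) ℝ :=
  fun i j => if (i : ℕ) + (j : ℕ) + 1 ≤ s then 1 else 0

/-- The deformed matrix `Ũ_n`, with entries `n/(k_i k_j)` on and above the
antidiagonal and `0` below it. -/
noncomputable def Utilde (n : ℕ) : Matrix (Fin (Sn n).card) (Fin (Sn n).card) ℝ :=
  fun i j => if (i : ℕ) + (j : ℕ) + 1 ≤ (Sn n).card then
    (n : ℝ) / ((kseq n i : ℝ) * (kseq n j : ℝ)) else 0

/-- The deformed Mertens matrix `M̃_n = T Ũ_n⁻¹ T`. -/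
noncomputable def Mtilde (n : ℕ) : Matrix (Fin (Sn n).card) (Fin (Sn n).card) ℝ :=
  TmatR (Sn n).card * (Utilde n)⁻¹ * TmatR (Sn n).card

variable {n : ℕ}

lemma mem_Sn_iff {d : ℕ} : d ∈ Sn n ↔ ∃ k, 1 ≤ k ∧ k ≤ n ∧ n / k = d := by
  simp [Sn, Finset.mem_image, Finset.mem_Icc, and_assoc]

lemma Sn_pos {d : ℕ} (hd : d ∈ Sn n) : 0 < d := by
  obtain ⟨k, hk1, hkn, rfl⟩ := mem_Sn_iff.mp hd
  exact Nat.div_pos hkn hk1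

lemma Sn_le {d : ℕ} (hd : d ∈ Sn n) : d ≤ n := by
  obtain ⟨k, hk1, hkn, rfl⟩ := mem_Sn_iff.mp hd
  exact Nat.div_le_self n k

lemma div_mem_Sn {d : ℕ} (hd : d ∈ Sn n) : n / d ∈ Sn n :=
  mem_Sn_iff.mpr ⟨d, Sn_pos hd, Sn_le hd, rfl⟩

lemma div_div_eq {d : ℕ} (hd : d ∈ Sn n) : n / (n / d) = d := by
  obtain ⟨k, hk1, hkn, rfl⟩ := mem_Sn_iff.mp hd
  set d := n / k with hdk
  have hd1 : 0 < d := Nat.div_pos hkn hk1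
  have hm1 : 0 < n / d := Nat.div_pos (Nat.div_le_self n k) hd1
  have hkm : k ≤ n / d := (Nat.le_div_iff_mul_le hd1).mpr (by rw [hdk, Nat.mul_comm]; exact Nat.div_mul_le_self n k)
  have h1 : n / (n / d) ≤ d := hdk ▸ Nat.div_le_div_left hkm hk1
  have h2 : d ≤ n / (n / d) := (Nat.le_div_iff_mul_le hm1).mpr (by rw [Nat.mul_comm]; exact Nat.div_mul_le_self n d)
  omega

/-- mul with cofactor ≤ n -/
lemma Sn_mul_div_le {d : ℕ} : d * (n / d) ≤ n := by
  rw [Nat.mul_comm]; exact Nat.div_mul_le_self n d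

lemma sq_mem_Sn (hn : 0 < n) {m : ℕ} (hm : 0 < m) (h : m * m ≤ n) : n / (n / m) = m ∧ m ∈ Sn n := by
  have hq : m ≤ n / m := (Nat.le_div_iff_mul_le hm).mpr h
  have hq1 : 0 < n / m := lt_of_lt_of_le hm hq
  have h2 : m ≤ n / (n / m) := (Nat.le_div_iff_mul_le hq1).mpr (by rw [Nat.mul_comm]; exact Nat.div_mul_le_self n m)
  have h1 : n / (n / m) ≤ m := by
    by_contra hc
    push_neg at hc
    have hq2 : (m + 1) * (n / m) ≤ n := (Nat.le_div_iff_mul_le hq1).mp hc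
    have hexp : (m + 1) * (n / m) = m * (n / m) + n / m := by ring
    have hmod := Nat.mod_lt n hm
    have hh := Nat.div_add_mod n m
    omega
  have heq : n / (n / m) = m := le_antisymm h1 h2
  exact ⟨heq, mem_Sn_iff.mpr ⟨n / m, hq1, Nat.div_le_self n m, heq⟩⟩

lemma kseq_eq_emb : kseq n = (Sn n).orderEmbOfFin rfl := by
  funext i; exact Finset.coe_orderIsoOfFin_apply _ _ _

lemma kseq_strictMono : StrictMono (kseq n) := by
  rw [kseq_eq_emb]; exact ((Sn n).orderEmbOfFin rfl).strictMono

lemma kseq_mem (i : Fin (Sn n).card) : kseq n i ∈ Sn n := by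
  rw [kseq_eq_emb]; exact Finset.orderEmbOfFin_mem _ _ _

lemma kseq_pos (i : Fin (Sn n).card) : 0 < kseq n i := Sn_pos (kseq_mem i)

lemma kseq_le (i : Fin (Sn n).card) : kseq n i ≤ n := Sn_le (kseq_mem i)

lemma kseq_surj {d : ℕ} (hd : d ∈ Sn n) : ∃ i, kseq n i = d := by
  refine ⟨(Sn n).orderIsoOfFin rfl |>.symm ⟨d, hd⟩, ?_⟩
  simp [kseq]

lemma Sn_div_lt_div {d e : ℕ} (hd : d ∈ Sn n) (he : e ∈ Sn n) (h : d < e) :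
    n / e < n / d := by
  refine lt_of_le_of_ne (Nat.div_le_div_left h.le (Sn_pos hd)) fun hc => ?_
  have := div_div_eq hd
  have := div_div_eq he
  rw [hc] at *
  omega

lemma kseq_rev (i : Fin (Sn n).card) : kseq n i.rev = n / kseq n i := by
  have key : (fun j : Fin (Sn n).card => n / kseq n j.rev) = kseq n := by
    rw [kseq_eq_emb]
    refine Finset.orderEmbOfFin_unique rfl (fun j => ?_) ?_
    · rw [← kseq_eq_emb]; exact div_mem_Sn (kseq_mem _)
    · intro a b hab
      rw [← kseq_eq_emb]
      exact Sn_div_lt_div (kseq_mem _) (kseq_mem _)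
        (kseq_strictMono (by simpa using Fin.rev_lt_rev.mpr hab))
  have h : n / kseq n i.rev = kseq n i := congrFun key i
  have := div_div_eq (kseq_mem (n := n) i.rev)
  rw [h] at this
  exact this.symm

/-- consecutiveness: nothing in Sn strictly between consecutive kseq values. -/
lemma kseq_consec {i j : Fin (Sn n).card} (hij : (i : ℕ) + 1 = (j : ℕ)) {d : ℕ}
    (hd : d ∈ Sn n) (h1 : kseq n i < d) : kseq n j ≤ d := by
  obtain ⟨m, rfl⟩ := kseq_surj hd
  by_contra hc
  push_neg at hc
  have h2 : i < m := kseq_strictMono.lt_iff_lt.mp h1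
  have h3 : m < j := kseq_strictMono.lt_iff_lt.mp hc
  omega



noncomputable def Winv (n : ℕ) : Matrix (Fin (Sn n).card) (Fin (Sn n).card) ℝ :=
  fun i j => (if (i : ℕ) + (j : ℕ) + 1 = (Sn n).card then 1
    else if (i : ℕ) + (j : ℕ) = (Sn n).card then -1 else 0)
    * ((kseq n i : ℝ) * (kseq n j : ℝ) / (n : ℝ))

lemma Utilde_mul_Winv {n : ℕ} (hn : 0 < n) : Utilde n * Winv n = 1 := by
  ext i j
  have hjs : (j : ℕ) < (Sn n).card := j.2
  have his : (i : ℕ) < (Sn n).card := i.2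
  rw [Matrix.mul_apply]
  have split : ∀ k : Fin (Sn n).card,
      Utilde n i k * Winv n k j =
        (if k = j.rev then Utilde n i k * ((kseq n k : ℝ) * (kseq n j : ℝ) / n) else 0)
        + (if (k : ℕ) + (j : ℕ) = (Sn n).card then
            -(Utilde n i k * ((kseq n k : ℝ) * (kseq n j : ℝ) / n)) else 0) := by
    intro k
    have hrev : k = j.rev ↔ (k : ℕ) + (j : ℕ) + 1 = (Sn n).card := by
      rw [Fin.ext_iff, Fin.val_rev]
      omega
    simp only [Winv]
    by_cases h1 : (k : ℕ) + (j : ℕ) + 1 = (Sn n).card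
    · rw [if_pos h1, if_pos (hrev.mpr h1), if_neg (by omega)]
      ring
    · rw [if_neg h1, if_neg (fun hc => h1 (hrev.mp hc))]
      by_cases h2 : (k : ℕ) + (j : ℕ) = (Sn n).card
      · rw [if_pos h2, if_pos h2]; ring
      · rw [if_neg h2, if_neg h2]; ring
  rw [Finset.sum_congr rfl (fun k _ => split k), Finset.sum_add_distrib,
    Finset.sum_ite_eq' Finset.univ j.rev, if_pos (Finset.mem_univ _)]
  -- second sum
  have hsecond : (∑ k : Fin (Sn n).card, if (k : ℕ) + (j : ℕ) = (Sn n).card then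
      -(Utilde n i k * ((kseq n k : ℝ) * (kseq n j : ℝ) / n)) else 0)
      = (if 1 ≤ (j : ℕ) ∧ (i : ℕ) + 1 ≤ (j : ℕ) then -((kseq n j : ℝ) / (kseq n i : ℝ)) else 0) := by
    by_cases hj : 1 ≤ (j : ℕ)
    · have hk0 : (Sn n).card - (j : ℕ) < (Sn n).card := by omega
      set k0 : Fin (Sn n).card := ⟨(Sn n).card - (j : ℕ), hk0⟩ with hk0def
      have hcond : ∀ k : Fin (Sn n).card, ((k : ℕ) + (j : ℕ) = (Sn n).card) ↔ k = k0 := by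
        intro k; rw [Fin.ext_iff]; simp only [hk0def]; omega
      rw [Finset.sum_congr rfl (fun k _ => by rw [if_congr (hcond k) rfl rfl]),
        Finset.sum_ite_eq' Finset.univ k0, if_pos (Finset.mem_univ _)]
      have hU : Utilde n i k0 = if (i : ℕ) + 1 ≤ (j : ℕ) then
          (n : ℝ) / ((kseq n i : ℝ) * (kseq n k0 : ℝ)) else 0 := by
        simp only [Utilde, hk0def]
        congr 1
        · simp only [eq_iff_iff]; omega
      rw [hU]
      by_cases hij : (i : ℕ) + 1 ≤ (j : ℕ)
      · rw [if_pos hij, if_pos ⟨hj, hij⟩]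
        have h1 : (kseq n i : ℝ) ≠ 0 := Nat.cast_ne_zero.mpr (kseq_pos i).ne'
        have h2 : (kseq n k0 : ℝ) ≠ 0 := Nat.cast_ne_zero.mpr (kseq_pos k0).ne'
        have h3 : (n : ℝ) ≠ 0 := Nat.cast_ne_zero.mpr hn.ne'
        field_simp
      · rw [if_neg hij, if_neg (by tauto)]; ring
    · rw [if_neg (by omega)]
      refine Finset.sum_eq_zero fun k _ => ?_
      rw [if_neg (by omega)]
  rw [hsecond]
  -- first term
  have hU1 : Utilde n i j.rev = if (i : ℕ) ≤ (j : ℕ) then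
      (n : ℝ) / ((kseq n i : ℝ) * (kseq n j.rev : ℝ)) else 0 := by
    simp only [Utilde]
    congr 1
    · simp only [eq_iff_iff, Fin.val_rev]; omega
  rw [hU1]
  have h1 : (kseq n i : ℝ) ≠ 0 := Nat.cast_ne_zero.mpr (kseq_pos i).ne'
  have h2 : (kseq n j.rev : ℝ) ≠ 0 := Nat.cast_ne_zero.mpr (kseq_pos j.rev).ne'
  have h3 : (n : ℝ) ≠ 0 := Nat.cast_ne_zero.mpr hn.ne'
  rw [Matrix.one_apply]
  rcases lt_trichotomy (i : ℕ) (j : ℕ) with h | h | h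
  · rw [if_pos h.le, if_pos ⟨by omega, by omega⟩, if_neg (by rw [Fin.ext_iff]; omega)]
    field_simp
    ring
  · have hij : i = j := Fin.ext h
    subst hij
    rw [if_pos le_rfl, if_neg (by omega), if_pos rfl]
    field_simp
    ring
  · rw [if_neg (by omega), if_neg (by omega), if_neg (by rw [Fin.ext_iff]; omega)]
    ring


/-- junk-valued enumeration of Sn -/
noncomputable def KK (n : ℕ) (t : ℕ) : ℕ :=
  if h : t < (Sn n).card then kseq n ⟨t, h⟩ else 0

lemma KK_eq {n : ℕ} (k : Fin (Sn n).card) : KK n (k : ℕ) = kseq n k := by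
  simp [KK, k.2]

lemma Mtilde_eq {n : ℕ} (hn : 0 < n) (i j : Fin (Sn n).card) :
    Mtilde n i j =
      (∑ k ∈ Finset.range (Sn n).card,
        if (j : ℕ) ≤ k ∧ (i : ℕ) + k + 1 ≤ (Sn n).card then
          (KK n k : ℝ) * (KK n ((Sn n).card - 1 - k) : ℝ) / n else 0)
      - (∑ k ∈ Finset.range (Sn n).card,
        if (j : ℕ) + 1 ≤ k ∧ (i : ℕ) + k + 1 ≤ (Sn n).card then
          (KK n k : ℝ) * (KK n ((Sn n).card - k) : ℝ) / n else 0) := by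
  have hWinv : (Utilde n)⁻¹ = Winv n := Matrix.inv_eq_right_inv (Utilde_mul_Winv hn)
  rw [Mtilde, hWinv, Matrix.mul_assoc, Matrix.mul_apply]
  have inner : ∀ k : Fin (Sn n).card, (Winv n * TmatR (Sn n).card) k j =
      (if (j : ℕ) ≤ (k : ℕ) then (KK n (k : ℕ) : ℝ) * (KK n ((Sn n).card - 1 - (k : ℕ)) : ℝ) / n else 0)
      - (if (j : ℕ) + 1 ≤ (k : ℕ) then (KK n (k : ℕ) : ℝ) * (KK n ((Sn n).card - (k : ℕ)) : ℝ) / n else 0) := by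
    intro k
    rw [Matrix.mul_apply]
    have split : ∀ l : Fin (Sn n).card,
        Winv n k l * TmatR (Sn n).card l j =
          (if l = k.rev then ((kseq n k : ℝ) * (kseq n l : ℝ) / n) * TmatR (Sn n).card l j else 0)
          + (if (k : ℕ) + (l : ℕ) = (Sn n).card then
              -(((kseq n k : ℝ) * (kseq n l : ℝ) / n) * TmatR (Sn n).card l j) else 0) := by
      intro l
      have hrev : l = k.rev ↔ (k : ℕ) + (l : ℕ) + 1 = (Sn n).card := by
        rw [Fin.ext_iff, Fin.val_rev]; omega
      simp only [Winv]
      by_cases h1 : (k : ℕ) + (l : ℕ) + 1 = (Sn n).card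
      · rw [if_pos h1, if_pos (hrev.mpr h1), if_neg (by omega)]; ring
      · rw [if_neg h1, if_neg (fun hc => h1 (hrev.mp hc))]
        by_cases h2 : (k : ℕ) + (l : ℕ) = (Sn n).card
        · rw [if_pos h2, if_pos h2]; ring
        · rw [if_neg h2, if_neg h2]; ring
    rw [Finset.sum_congr rfl (fun l _ => split l), Finset.sum_add_distrib,
      Finset.sum_ite_eq' Finset.univ k.rev, if_pos (Finset.mem_univ _)]
    have hT1 : TmatR (Sn n).card k.rev j = if (j : ℕ) ≤ (k : ℕ) then 1 else 0 := by
      simp only [TmatR, Fin.val_rev]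
      congr 1
      simp only [eq_iff_iff]
      have := k.2; have := j.2
      omega
    have hKrev : (kseq n k.rev : ℕ) = KK n ((Sn n).card - 1 - (k : ℕ)) := by
      rw [← KK_eq k.rev, Fin.val_rev]
      congr 1
      omega
    have hsecond : (∑ l : Fin (Sn n).card, if (k : ℕ) + (l : ℕ) = (Sn n).card then
        -(((kseq n k : ℝ) * (kseq n l : ℝ) / n) * TmatR (Sn n).card l j) else 0)
        = (if (j : ℕ) + 1 ≤ (k : ℕ) then
            -((KK n (k : ℕ) : ℝ) * (KK n ((Sn n).card - (k : ℕ)) : ℝ) / n) else 0) := by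
      by_cases hk : 1 ≤ (k : ℕ)
      · have hl0 : (Sn n).card - (k : ℕ) < (Sn n).card := by have := k.2; omega
        set l0 : Fin (Sn n).card := ⟨(Sn n).card - (k : ℕ), hl0⟩ with hl0def
        have hcond : ∀ l : Fin (Sn n).card, ((k : ℕ) + (l : ℕ) = (Sn n).card) ↔ l = l0 := by
          intro l; rw [Fin.ext_iff]; simp only [hl0def]; have := k.2; omega
        rw [Finset.sum_congr rfl (fun l _ => by rw [if_congr (hcond l) rfl rfl]),
          Finset.sum_ite_eq' Finset.univ l0, if_pos (Finset.mem_univ _)]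
        have hT0 : TmatR (Sn n).card l0 j = if (j : ℕ) + 1 ≤ (k : ℕ) then 1 else 0 := by
          simp only [TmatR, hl0def]
          congr 1
          simp only [eq_iff_iff]
          have := j.2; omega
        have hKl0 : (kseq n l0 : ℕ) = KK n ((Sn n).card - (k : ℕ)) := (KK_eq l0).symm
        rw [hT0, hKl0, KK_eq]
        by_cases hjk : (j : ℕ) + 1 ≤ (k : ℕ)
        · rw [if_pos hjk, if_pos hjk]; ring
        · rw [if_neg hjk, if_neg hjk]; ring
      · have hknone : ∀ l : Fin (Sn n).card, ¬((k : ℕ) + (l : ℕ) = (Sn n).card) := by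
          intro l; have := l.2; omega
        rw [Finset.sum_congr rfl (fun l _ => by rw [if_neg (hknone l)]), Finset.sum_const_zero]
        rw [if_neg (by omega)]
    rw [hsecond, hT1, hKrev, KK_eq]
    split_ifs <;> first | ring1 | (exfalso; omega)
  rw [Finset.sum_congr rfl (fun k _ => by rw [inner k])]
  have expand : ∀ k : Fin (Sn n).card,
      TmatR (Sn n).card i k *
        ((if (j : ℕ) ≤ (k : ℕ) then (KK n (k : ℕ) : ℝ) * (KK n ((Sn n).card - 1 - (k : ℕ)) : ℝ) / n else 0)
        - (if (j : ℕ) + 1 ≤ (k : ℕ) then (KK n (k : ℕ) : ℝ) * (KK n ((Sn n).card - (k : ℕ)) : ℝ) / n else 0))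
      = (if (j : ℕ) ≤ (k : ℕ) ∧ (i : ℕ) + (k : ℕ) + 1 ≤ (Sn n).card then
          (KK n (k : ℕ) : ℝ) * (KK n ((Sn n).card - 1 - (k : ℕ)) : ℝ) / n else 0)
        - (if (j : ℕ) + 1 ≤ (k : ℕ) ∧ (i : ℕ) + (k : ℕ) + 1 ≤ (Sn n).card then
          (KK n (k : ℕ) : ℝ) * (KK n ((Sn n).card - (k : ℕ)) : ℝ) / n else 0) := by
    intro k
    simp only [TmatR]
    split_ifs <;> first | ring1 | (exfalso; omega)
  rw [Finset.sum_congr rfl (fun k _ => expand k), Finset.sum_sub_distrib]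
  congr 1
  · exact Fin.sum_univ_eq_sum_range (fun t => if (j : ℕ) ≤ t ∧ (i : ℕ) + t + 1 ≤ (Sn n).card then
      (KK n t : ℝ) * (KK n ((Sn n).card - 1 - t) : ℝ) / n else 0) (Sn n).card
  · exact Fin.sum_univ_eq_sum_range (fun t => if (j : ℕ) + 1 ≤ t ∧ (i : ℕ) + t + 1 ≤ (Sn n).card then
      (KK n t : ℝ) * (KK n ((Sn n).card - t) : ℝ) / n else 0) (Sn n).card

lemma key_bound {n : ℕ} (hn : 0 < n) {a b : ℕ} (ha : a ∈ Sn n) (hb : b ∈ Sn n) (hab : a < b)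
    (hcons : ∀ d ∈ Sn n, a < d → b ≤ d) :
    (b : ℝ) * ((n / a : ℕ) : ℝ) - (b : ℝ) * ((n / b : ℕ) : ℝ) ≤
      (n : ℝ) / a + (n : ℝ) / b + 2 * (n : ℝ) / ((n / b : ℕ) : ℝ) := by
  have ha1 : 0 < a := Sn_pos ha
  have hb1 : 0 < b := Sn_pos hb
  have hbn : b ≤ n := Sn_le hb
  have hq1 : 0 < n / b := Nat.div_pos hbn hb1
  have haR : (0 : ℝ) < a := by exact_mod_cast ha1
  have hbR : (0 : ℝ) < b := by exact_mod_cast hb1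
  have hnR : (0 : ℝ) < n := by exact_mod_cast hn
  have hqR : (0 : ℝ) < ((n / b : ℕ) : ℝ) := by exact_mod_cast hq1
  by_cases hbsq : b * b ≤ n
  · -- small case : b = a + 1
    have hmem : a + 1 ∈ Sn n :=
      (sq_mem_Sn hn (by omega) (le_trans (Nat.mul_le_mul (by omega) (by omega)) hbsq)).2
    have hba : b = a + 1 := le_antisymm (hcons _ hmem (by omega)) (by omega)
    have h1 : ((n / a : ℕ) : ℝ) ≤ (n : ℝ) / a := Nat.cast_div_le
    have h2 : (n : ℝ) / b - 1 ≤ ((n / b : ℕ) : ℝ) := by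
      have hnat : n < (n / b + 1) * b := by
        have e1 : (n / b + 1) * b = b * (n / b) + b := by ring
        have e2 := Nat.div_add_mod n b
        have e3 := Nat.mod_lt n hb1
        omega
      have : (n : ℝ) < (((n / b : ℕ) : ℝ) + 1) * b := by exact_mod_cast hnat
      rw [div_sub_one hbR.ne', div_le_iff₀ hbR]
      linarith
    have hbleq : (b : ℝ) ≤ (n : ℝ) / b := by
      rw [le_div_iff₀ hbR]
      exact_mod_cast hbsq
    have hbaR : (b : ℝ) = (a : ℝ) + 1 := by exact_mod_cast hba
    have hstep : (b : ℝ) * ((n / a : ℕ) : ℝ) - (b : ℝ) * ((n / b : ℕ) : ℝ) ≤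
        (b : ℝ) * ((n : ℝ) / a) - (b : ℝ) * ((n : ℝ) / b - 1) := by
      have := mul_le_mul_of_nonneg_left h1 hbR.le
      have := mul_le_mul_of_nonneg_left h2 hbR.le
      linarith
    have hcomp : (b : ℝ) * ((n : ℝ) / a) - (b : ℝ) * ((n : ℝ) / b - 1) =
        (n : ℝ) / a + (b : ℝ) := by
      field_simp [hbaR]
      rw [hbaR]; ring
    have h2nq : (0 : ℝ) ≤ 2 * (n : ℝ) / ((n / b : ℕ) : ℝ) := by positivity
    linarith
  · -- large case
    push_neg at hbsq
    set q := n / b with hqdef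
    have hqb : q < b := Nat.div_lt_iff_lt_mul hb1 |>.mpr (by omega)
    have hqsq : q * q ≤ n := le_trans (Nat.mul_le_mul_left q hqb.le)
      (by rw [hqdef]; rw [Nat.mul_comm]; exact Nat.mul_div_le n b)
    have hqSn : q ∈ Sn n := div_mem_Sn hb
    have hna : n / a ∈ Sn n := div_mem_Sn ha
    have hqlt : q < n / a := Sn_div_lt_div ha hb hab
    have hdiff : n / a ≤ q + 2 := by
      by_cases hq3 : (q + 1) * (q + 1) ≤ n
      · -- q+1 ∈ Sn, show n/a ≤ q+1
        have hq1mem : q + 1 ∈ Sn n := (sq_mem_Sn hn (by omega) hq3).2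
        by_contra hc
        push_neg at hc
        have he : q + 1 < n / a := by omega
        have h5 : a < n / (q + 1) := by
          have := Sn_div_lt_div hq1mem hna he
          rwa [div_div_eq ha] at this
        have h6 : n / (q + 1) < b := by
          have := Sn_div_lt_div hqSn hq1mem (by omega)
          rwa [div_div_eq hb] at this
        exact absurd (hcons _ (div_mem_Sn hq1mem) h5) (by omega)
      · push_neg at hq3
        have hqa : q ≤ a := by
          by_contra hc
          push_neg at hc
          exact absurd (hcons _ hqSn hc) (by omega)
        have h7 : n / a ≤ n / q := Nat.div_le_div_left hqa (by omega)
        have h8 : n / q ≤ q + 2 := by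
          have h9 : n ≤ q * (q + 2) := by nlinarith
          calc n / q ≤ (q * (q + 2)) / q := Nat.div_le_div_right h9
            _ = q + 2 := by rw [Nat.mul_div_cancel_left _ (by omega)]
        omega
    have hdiffR : (b : ℝ) * ((n / a : ℕ) : ℝ) - (b : ℝ) * ((q : ℕ) : ℝ) ≤ 2 * b := by
      have : ((n / a : ℕ) : ℝ) ≤ (q : ℝ) + 2 := by exact_mod_cast hdiff
      nlinarith
    have hblenq : (b : ℝ) ≤ (n : ℝ) / q := by
      rw [le_div_iff₀ (by exact_mod_cast hq1)]
      have h10 : q * b ≤ n := by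
        calc q * b = b * q := by ring
          _ ≤ n := by rw [hqdef]; exact Nat.mul_div_le n b
      calc (b:ℝ) * ((q:ℕ):ℝ) = ((q * b : ℕ) : ℝ) := by push_cast; ring
        _ ≤ (n : ℝ) := by exact_mod_cast h10
    have hpos1 : (0 : ℝ) ≤ (n : ℝ) / a := by positivity
    have hpos2 : (0 : ℝ) ≤ (n : ℝ) / b := by positivity
    have : 2 * (n : ℝ) / ((q : ℕ) : ℝ) = 2 * ((n : ℝ) / q) := by ring
    linarith

lemma KK_def {t : ℕ} (h : t < (Sn n).card) : KK n t = kseq n ⟨t, h⟩ := dif_pos h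

lemma KK_mem {t : ℕ} (h : t < (Sn n).card) : KK n t ∈ Sn n := by
  rw [KK_def h]; exact kseq_mem _

lemma KK_pos {t : ℕ} (h : t < (Sn n).card) : 0 < KK n t := Sn_pos (KK_mem h)

lemma KK_lt {t u : ℕ} (htu : t < u) (h : u < (Sn n).card) : KK n t < KK n u := by
  rw [KK_def (lt_trans htu h), KK_def h]
  exact kseq_strictMono (by simp [Fin.mk_lt_mk, htu])

lemma KK_rev {t : ℕ} (h : t < (Sn n).card) :
    KK n ((Sn n).card - 1 - t) = n / KK n t := by
  have h2 : (Sn n).card - 1 - t < (Sn n).card := by omega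
  rw [KK_def h2, KK_def h, ← kseq_rev ⟨t, h⟩]
  congr 1
  rw [Fin.ext_iff, Fin.val_rev]
  simp only [Fin.val_mk]
  omega

lemma KK_consec {t : ℕ} (h : t + 1 < (Sn n).card) {d : ℕ} (hd : d ∈ Sn n)
    (h1 : KK n t < d) : KK n (t + 1) ≤ d := by
  rw [KK_def h]
  rw [KK_def (by omega : t < (Sn n).card)] at h1
  exact kseq_consec (by simp) hd h1

lemma image_kseq : Finset.image (kseq n) Finset.univ = Sn n := by
  apply Finset.eq_of_subset_of_card_le
  · intro d hd
    simp only [Finset.mem_image] at hd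
    obtain ⟨i, _, rfl⟩ := hd
    exact kseq_mem i
  · rw [Finset.card_image_of_injective _ kseq_strictMono.injective, Finset.card_univ,
      Fintype.card_fin]

lemma harmonic_KK : (∑ t ∈ Finset.range (Sn n).card, ((KK n t : ℝ))⁻¹)
    ≤ 1 + Real.log n := by
  have h1 : (∑ t ∈ Finset.range (Sn n).card, ((KK n t : ℝ))⁻¹)
      = ∑ i : Fin (Sn n).card, ((kseq n i : ℝ))⁻¹ := by
    rw [← Fin.sum_univ_eq_sum_range (fun t => ((KK n t : ℝ))⁻¹) (Sn n).card]
    exact Finset.sum_congr rfl fun i _ => by rw [KK_def i.2]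
  have h2 : (∑ i : Fin (Sn n).card, ((kseq n i : ℝ))⁻¹) = ∑ d ∈ Sn n, ((d : ℝ))⁻¹ := by
    conv_rhs => rw [← image_kseq]
    rw [Finset.sum_image (fun a _ b _ h => kseq_strictMono.injective h)]
  have h3 : (∑ d ∈ Sn n, ((d : ℝ))⁻¹) ≤ ∑ d ∈ Finset.Icc 1 n, ((d : ℝ))⁻¹ := by
    apply Finset.sum_le_sum_of_subset_of_nonneg
    · intro d hd
      rw [Finset.mem_Icc]
      exact ⟨Sn_pos hd, Sn_le hd⟩
    · intro d _ _; positivity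
  have h4 : (∑ d ∈ Finset.Icc 1 n, ((d : ℝ))⁻¹) = ((harmonic n : ℚ) : ℝ) := by
    rw [harmonic_eq_sum_Icc]
    push_cast
    rfl
  rw [h1, h2]
  calc (∑ d ∈ Sn n, ((d : ℝ))⁻¹) ≤ ∑ d ∈ Finset.Icc 1 n, ((d : ℝ))⁻¹ := h3
    _ = ((harmonic n : ℚ) : ℝ) := h4
    _ ≤ 1 + Real.log n := harmonic_le_one_add_log n

lemma reindex_sum_le (g : ℕ → ℕ)
    (hginj : ∀ k ∈ Finset.range (Sn n).card, ∀ l ∈ Finset.range (Sn n).card,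
      1 ≤ k → 1 ≤ l → g k = g l → k = l)
    (hgmap : ∀ k ∈ Finset.range (Sn n).card, 1 ≤ k → g k ∈ Finset.range (Sn n).card) :
    (∑ k ∈ Finset.range (Sn n).card, if 1 ≤ k then ((KK n (g k) : ℝ))⁻¹ else 0)
      ≤ ∑ t ∈ Finset.range (Sn n).card, ((KK n t : ℝ))⁻¹ := by
  rw [← Finset.sum_filter]
  set A := (Finset.range (Sn n).card).filter (fun k => 1 ≤ k) with hA
  have hinj : Set.InjOn g A := by
    intro x hx y hy hxy
    simp only [hA, Finset.coe_filter, Set.mem_setOf_eq] at hx hy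
    exact hginj x (by simp [Finset.mem_range, hx.1]) y (by simp [Finset.mem_range, hy.1])
      hx.2 hy.2 hxy
  have himg := Finset.sum_image (s := A) (f := fun t => ((KK n t : ℝ))⁻¹) (g := g)
    (fun a ha b hb h => hinj ha hb h)
  rw [← himg]
  apply Finset.sum_le_sum_of_subset_of_nonneg
  · intro t ht
    simp only [Finset.mem_image, hA, Finset.mem_filter] at ht
    obtain ⟨k, ⟨hk1, hk2⟩, rfl⟩ := ht
    exact hgmap k hk1 hk2
  · intro d _ _; positivity

theorem final_bound {n : ℕ} (hn : 0 < n) (i j : Fin (Sn n).card) :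
    |Mtilde n i j| ≤ 5 + 4 * Real.log n := by
  have hnR : (0 : ℝ) < n := by exact_mod_cast hn
  have hjs : (j : ℕ) < (Sn n).card := j.2
  rw [Mtilde_eq hn i j]
  set cc : ℕ → ℝ := fun k => (KK n k : ℝ) * (KK n ((Sn n).card - 1 - k) : ℝ) / n with hcc
  set dd : ℕ → ℝ := fun k => (KK n k : ℝ) * (KK n ((Sn n).card - k) : ℝ) / n with hdd
  set F : ℕ → ℝ := fun k => if (i : ℕ) + k + 1 ≤ (Sn n).card then cc k else 0 with hF
  have hsplitP : ∀ k ∈ Finset.range (Sn n).card,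
      (if (j : ℕ) ≤ k ∧ (i : ℕ) + k + 1 ≤ (Sn n).card then cc k else 0)
      = (if k = (j : ℕ) then F k else 0)
        + (if (j : ℕ) + 1 ≤ k ∧ (i : ℕ) + k + 1 ≤ (Sn n).card then cc k else 0) := by
    intro k _
    simp only [hF]
    split_ifs <;> first | ring1 | (exfalso; omega)
  rw [Finset.sum_congr rfl hsplitP, Finset.sum_add_distrib,
    Finset.sum_ite_eq' (Finset.range (Sn n).card) ((j : ℕ)) F,
    if_pos (Finset.mem_range.mpr hjs)]
  have hcomb : ∀ k ∈ Finset.range (Sn n).card,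
      (if (j : ℕ) + 1 ≤ k ∧ (i : ℕ) + k + 1 ≤ (Sn n).card then cc k else 0)
      - (if (j : ℕ) + 1 ≤ k ∧ (i : ℕ) + k + 1 ≤ (Sn n).card then dd k else 0)
      = -(if (j : ℕ) + 1 ≤ k ∧ (i : ℕ) + k + 1 ≤ (Sn n).card then dd k - cc k else 0) := by
    intro k _
    split_ifs <;> ring
  have hre : F (j : ℕ)
      + (∑ k ∈ Finset.range (Sn n).card,
          if (j : ℕ) + 1 ≤ k ∧ (i : ℕ) + k + 1 ≤ (Sn n).card then cc k else 0)
      - (∑ k ∈ Finset.range (Sn n).card,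
          if (j : ℕ) + 1 ≤ k ∧ (i : ℕ) + k + 1 ≤ (Sn n).card then dd k else 0)
      = F (j : ℕ)
      - (∑ k ∈ Finset.range (Sn n).card,
          if (j : ℕ) + 1 ≤ k ∧ (i : ℕ) + k + 1 ≤ (Sn n).card then dd k - cc k else 0) := by
    rw [add_sub_assoc, ← Finset.sum_sub_distrib, Finset.sum_congr rfl hcomb,
      Finset.sum_neg_distrib]
    ring
  rw [hre]
  -- bounds on F j
  have hFj0 : 0 ≤ F (j : ℕ) := by
    simp only [hF, hcc]
    split_ifs
    · positivity
    · exact le_rfl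
  have hFj1 : F (j : ℕ) ≤ 1 := by
    simp only [hF, hcc]
    split_ifs
    · rw [div_le_one hnR, KK_rev hjs]
      have hmd : KK n (j : ℕ) * (n / KK n (j : ℕ)) ≤ n := Nat.mul_div_le n (KK n (j : ℕ))
      exact_mod_cast hmd
    · norm_num
  -- termwise bounds
  have hterm : ∀ k ∈ Finset.range (Sn n).card, 1 ≤ k →
      (0 ≤ dd k - cc k ∧ dd k - cc k ≤
        ((KK n (k - 1) : ℝ))⁻¹ + ((KK n k : ℝ))⁻¹ + 2 * ((KK n ((Sn n).card - 1 - k) : ℝ))⁻¹) := by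
    intro k hk hk1
    rw [Finset.mem_range] at hk
    have hk1s : k - 1 < (Sn n).card := by omega
    have ha := KK_mem (n := n) hk1s
    have hb := KK_mem (n := n) hk
    have hab : KK n (k - 1) < KK n k := KK_lt (by omega) hk
    have hcons : ∀ d ∈ Sn n, KK n (k - 1) < d → KK n k ≤ d := by
      intro d hd hlt
      have := KK_consec (t := k - 1) (by omega) hd hlt
      rwa [show k - 1 + 1 = k by omega] at this
    have hkb := key_bound hn ha hb hab hcons
    have hrev1 : KK n ((Sn n).card - k) = n / KK n (k - 1) := by
      have := KK_rev (n := n) hk1s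
      rwa [show (Sn n).card - 1 - (k - 1) = (Sn n).card - k by omega] at this
    have hrev2 : KK n ((Sn n).card - 1 - k) = n / KK n k := by
      exact KK_rev hk
    rw [← hrev1, ← hrev2] at hkb
    have haR : (0 : ℝ) < (KK n (k - 1) : ℝ) := by exact_mod_cast KK_pos hk1s
    have hbR : (0 : ℝ) < (KK n k : ℝ) := by exact_mod_cast KK_pos hk
    have hqR : (0 : ℝ) < (KK n ((Sn n).card - 1 - k) : ℝ) := by
      exact_mod_cast KK_pos (show (Sn n).card - 1 - k < (Sn n).card by omega)
    have hmono : (KK n ((Sn n).card - 1 - k) : ℝ) ≤ (KK n ((Sn n).card - k) : ℝ) := by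
      exact_mod_cast (KK_lt (show (Sn n).card - 1 - k < (Sn n).card - k by omega)
        (show (Sn n).card - k < (Sn n).card by omega)).le
    constructor
    · have hnum : 0 ≤ (KK n k : ℝ) * (KK n ((Sn n).card - k) : ℝ)
          - (KK n k : ℝ) * (KK n ((Sn n).card - 1 - k) : ℝ) := by nlinarith
      have : dd k - cc k = ((KK n k : ℝ) * (KK n ((Sn n).card - k) : ℝ)
          - (KK n k : ℝ) * (KK n ((Sn n).card - 1 - k) : ℝ)) / n := by
        simp only [hdd, hcc]; ring
      rw [this]
      positivity
    · have heq : dd k - cc k = ((KK n k : ℝ) * (KK n ((Sn n).card - k) : ℝ)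
          - (KK n k : ℝ) * (KK n ((Sn n).card - 1 - k) : ℝ)) / n := by
        simp only [hdd, hcc]; ring
      rw [heq, div_le_iff₀ hnR]
      have hrhs : (((KK n (k - 1) : ℝ))⁻¹ + ((KK n k : ℝ))⁻¹
          + 2 * ((KK n ((Sn n).card - 1 - k) : ℝ))⁻¹) * n
          = (n : ℝ) / (KK n (k - 1) : ℝ) + (n : ℝ) / (KK n k : ℝ)
            + 2 * (n : ℝ) / (KK n ((Sn n).card - 1 - k) : ℝ) := by
        field_simp
      rw [hrhs]
      linarith
  -- sum bound
  have hsum1 : (∑ k ∈ Finset.range (Sn n).card,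
      if (j : ℕ) + 1 ≤ k ∧ (i : ℕ) + k + 1 ≤ (Sn n).card then dd k - cc k else 0)
      ≤ ∑ k ∈ Finset.range (Sn n).card, (if 1 ≤ k then dd k - cc k else 0) := by
    apply Finset.sum_le_sum
    intro k hk
    split_ifs with h1 h2 h2
    · exact le_rfl
    · exact absurd (by omega : 1 ≤ k) h2
    · exact (hterm k hk h2).1
    · exact le_rfl
  have hsum0 : 0 ≤ (∑ k ∈ Finset.range (Sn n).card,
      if (j : ℕ) + 1 ≤ k ∧ (i : ℕ) + k + 1 ≤ (Sn n).card then dd k - cc k else 0) := by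
    apply Finset.sum_nonneg
    intro k hk
    split_ifs with h1
    · exact (hterm k hk (by omega)).1
    · exact le_rfl
  have hsum2 : (∑ k ∈ Finset.range (Sn n).card, (if 1 ≤ k then dd k - cc k else 0))
      ≤ ∑ k ∈ Finset.range (Sn n).card,
        ((if 1 ≤ k then ((KK n (k - 1) : ℝ))⁻¹ else 0)
          + (if 1 ≤ k then ((KK n k : ℝ))⁻¹ else 0)
          + 2 * (if 1 ≤ k then ((KK n ((Sn n).card - 1 - k) : ℝ))⁻¹ else 0)) := by
    apply Finset.sum_le_sum
    intro k hk
    split_ifs with h1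
    · linarith [(hterm k hk h1).2]
    · norm_num
  set H := ∑ t ∈ Finset.range (Sn n).card, ((KK n t : ℝ))⁻¹ with hH
  have hr1 : (∑ k ∈ Finset.range (Sn n).card, if 1 ≤ k then ((KK n (k - 1) : ℝ))⁻¹ else 0) ≤ H :=
    reindex_sum_le (fun k => k - 1)
      (by intro k hk l hl hk1 hl1 h; omega)
      (by intro k hk hk1; rw [Finset.mem_range] at *; omega)
  have hr2 : (∑ k ∈ Finset.range (Sn n).card, if 1 ≤ k then ((KK n k : ℝ))⁻¹ else 0) ≤ H :=
    reindex_sum_le (fun k => k)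
      (by intro k hk l hl hk1 hl1 h; omega)
      (by intro k hk hk1; exact hk)
  have hr3 : (∑ k ∈ Finset.range (Sn n).card,
      if 1 ≤ k then ((KK n ((Sn n).card - 1 - k) : ℝ))⁻¹ else 0) ≤ H :=
    reindex_sum_le (fun k => (Sn n).card - 1 - k)
      (by intro k hk l hl hk1 hl1 h; rw [Finset.mem_range] at *; omega)
      (by intro k hk hk1; rw [Finset.mem_range] at *; omega)
  have hHlog : H ≤ 1 + Real.log n := harmonic_KK
  have hsum3 : (∑ k ∈ Finset.range (Sn n).card,
        ((if 1 ≤ k then ((KK n (k - 1) : ℝ))⁻¹ else 0)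
          + (if 1 ≤ k then ((KK n k : ℝ))⁻¹ else 0)
          + 2 * (if 1 ≤ k then ((KK n ((Sn n).card - 1 - k) : ℝ))⁻¹ else 0)))
      ≤ 4 * (1 + Real.log n) := by
    rw [Finset.sum_add_distrib, Finset.sum_add_distrib, ← Finset.mul_sum]
    linarith
  have hlogn0 : 0 ≤ Real.log n := Real.log_nonneg (by exact_mod_cast hn)
  rw [abs_le]
  constructor
  · linarith
  · linarith

/-- All entries of the deformed Mertens matrix `M̃_n` are `O(log n)`. -/
theorem stmt_18 :
    ∃ C : ℝ, 0 < C ∧ ∀ n : ℕ, 0 < n →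
      ∀ i j : Fin (Sn n).card, |Mtilde n i j| ≤ C * Real.log (n + 1) := by
  refine ⟨9 / Real.log 2, by positivity, fun n hn i j => ?_⟩
  have hlog2 : 0 < Real.log 2 := Real.log_pos (by norm_num)
  have h21 : Real.log 2 ≤ 1 := by
    have := Real.log_le_sub_one_of_pos (by norm_num : (0:ℝ) < 2)
    linarith
  have hL2 : Real.log 2 ≤ Real.log ((n : ℝ) + 1) := by
    apply Real.log_le_log (by norm_num)
    have : (1 : ℝ) ≤ n := by exact_mod_cast hn
    linarith
  have hLn : Real.log n ≤ Real.log ((n : ℝ) + 1) := by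
    apply Real.log_le_log (by exact_mod_cast hn)
    linarith
  have hlogn0 : 0 ≤ Real.log n := Real.log_nonneg (by exact_mod_cast hn)
  have hX : 1 ≤ Real.log ((n : ℝ) + 1) / Real.log 2 := (one_le_div hlog2).mpr hL2
  have hX2 : Real.log ((n : ℝ) + 1) ≤ Real.log ((n : ℝ) + 1) / Real.log 2 := by
    rw [div_eq_mul_inv]
    have hinv : 1 ≤ (Real.log 2)⁻¹ := by
      rw [le_inv_comm₀] <;> simp [hlog2, h21]
    nlinarith [Real.log_nonneg (show (1:ℝ) ≤ (n:ℝ)+1 by have : (0:ℝ) ≤ n := Nat.cast_nonneg n; linarith)]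
  calc |Mtilde n i j| ≤ 5 + 4 * Real.log n := final_bound hn i j
    _ ≤ 9 / Real.log 2 * Real.log ((n : ℝ) + 1) := by
        have h9 : 9 / Real.log 2 * Real.log ((n : ℝ) + 1)
            = 9 * (Real.log ((n : ℝ) + 1) / Real.log 2) := by ring
        rw [h9]
        nlinarith
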